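/- Let d ≥ 1, μ ∈ ℝ^d, σ > 0, σ_s > 0 and θ ∈ ℝ^d with θ ≠ 0. The smoothed classification error of the linear classifier f_θ(x) = sign(⟨θ,x⟩) for the conditional Gaussian model with mean μ and variance σ², namely PE^{σ_s}(θ) = ½·(N(μ, σ²I_d) ⊗ N(0, σ_s²I_d))({(x, δ) : ⟨θ, x + δ⟩ ≤ 0}) + ½·(N(−μ, σ²I_d) ⊗ N(0, σ_s²I_d))({(x, δ) : ⟨θ, x + δ⟩ ≥ 0}), equals Φ(−⟨θ, μ⟩/(‖θ‖₂·√(σ² + σ_s²))). -/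

import Mathlib

open MeasureTheory ProbabilityTheory
open scoped RealInnerProductSpace NNReal

/-- The multivariate Gaussian measure `N(m, v·I_d)` on `ℝ^d = EuclideanSpace ℝ (Fin d)`. -/
noncomputable def gaussN (d : ℕ) (m : EuclideanSpace ℝ (Fin d)) (v : ℝ≥0) :
    Measure (EuclideanSpace ℝ (Fin d)) :=
  (Measure.pi fun i => gaussianReal (m i) v).map
    (MeasurableEquiv.toLp 2 (Fin d → ℝ))

/-- The standard Gaussian cumulative distribution function `Φ`. -/
noncomputable def Phi (z : ℝ) : ℝ := (gaussianReal 0 1 (Set.Iic z)).toReal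

section Aux
open Real
open scoped ENNReal

lemma pdf_conv (a b z : ℝ) {u w : ℝ≥0} (hu : u ≠ 0) (hw : w ≠ 0) (x : ℝ) :
    gaussianPDFReal a u x * gaussianPDFReal (b + x) w z
      = gaussianPDFReal (a + b) (u + w) z
        * gaussianPDFReal (a + u * (z - (a + b)) / (u + w)) (u * w / (u + w)) x := by
  have hu' : (0:ℝ) < u := lt_of_le_of_ne u.coe_nonneg (by exact_mod_cast (Ne.symm hu))
  have hw' : (0:ℝ) < w := lt_of_le_of_ne w.coe_nonneg (by exact_mod_cast (Ne.symm hw))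
  have huw : (0:ℝ) < (u:ℝ) + w := by linarith
  have key : ∀ (c1 c2 e1 e2 : ℝ), c1 * rexp e1 * (c2 * rexp e2) = (c1*c2) * rexp (e1+e2) := by
    intros; rw [Real.exp_add]; ring
  simp only [gaussianPDFReal, NNReal.coe_div, NNReal.coe_mul, NNReal.coe_add]
  rw [key, key]
  have hc : ((√(2 * π * (u:ℝ)))⁻¹ * (√(2 * π * (w:ℝ)))⁻¹ : ℝ)
      = (√(2 * π * ((u:ℝ) + w)))⁻¹ * (√(2 * π * ((u:ℝ) * w / ((u:ℝ) + w))))⁻¹ := by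
    rw [← mul_inv, ← mul_inv, ← Real.sqrt_mul (by positivity), ← Real.sqrt_mul (by positivity)]
    congr 1
    field_simp
  rw [hc]
  congr 1
  rw [Real.exp_eq_exp]
  field_simp
  ring

lemma gaussian_conv (a b : ℝ) (u w : ℝ≥0) :
    ((gaussianReal a u).prod (gaussianReal b w)).map (fun p : ℝ × ℝ => p.1 + p.2)
      = gaussianReal (a + b) (u + w) := by
  by_cases hu : u = 0
  · subst hu
    rw [gaussianReal_zero_var, Measure.dirac_prod, Measure.map_map (by fun_prop) (by fun_prop)]
    have : ((fun p : ℝ × ℝ => p.1 + p.2) ∘ Prod.mk a) = (a + ·) := rfl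
    rw [this, gaussianReal_map_const_add, add_comm b a, zero_add]
  by_cases hw : w = 0
  · subst hw
    rw [gaussianReal_zero_var, Measure.prod_dirac, Measure.map_map (by fun_prop) (by fun_prop)]
    have : ((fun p : ℝ × ℝ => p.1 + p.2) ∘ (fun x => (x, b))) = (· + b) := rfl
    rw [this, gaussianReal_map_add_const, add_zero]
  -- main case
  have hmeas : Measurable (fun p : ℝ × ℝ => p.1 + p.2) := by fun_prop
  ext s hs
  rw [Measure.map_apply hmeas hs, Measure.prod_apply (hmeas hs)]
  have h1 : ∀ x : ℝ, (Prod.mk x ⁻¹' ((fun p : ℝ × ℝ => p.1 + p.2) ⁻¹' s))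
      = (fun y => x + y) ⁻¹' s := fun x => rfl
  have h2 : ∀ x : ℝ, gaussianReal b w ((fun y => x + y) ⁻¹' s)
      = ∫⁻ z in s, gaussianPDF (b + x) w z := by
    intro x
    rw [← Measure.map_apply (by fun_prop) hs, gaussianReal_map_const_add,
      gaussianReal_apply _ hw]
  simp_rw [h1, h2]
  rw [gaussianReal_of_var_ne_zero _ hu,
    lintegral_withDensity_eq_lintegral_mul _ (measurable_gaussianPDF a u)
      (by
        have : Measurable (fun p : ℝ × ℝ => gaussianPDF (b + p.1) w p.2) := by
          apply Measurable.ennreal_ofReal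
          have : Continuous (fun p : ℝ × ℝ => gaussianPDFReal (b + p.1) w p.2) := by
            unfold gaussianPDFReal
            fun_prop
          exact this.measurable
        exact this.lintegral_prod_right')]
  simp only [Pi.mul_apply]
  have h3 : ∀ x : ℝ, gaussianPDF a u x * ∫⁻ z in s, gaussianPDF (b + x) w z
      = ∫⁻ z in s, gaussianPDF a u x * gaussianPDF (b + x) w z := by
    intro x
    rw [lintegral_const_mul _ (measurable_gaussianPDF _ _)]
  simp_rw [h3]
  rw [lintegral_lintegral_swap (by
    have m1 : Measurable (fun p : ℝ × ℝ => gaussianPDF a u p.1) :=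
      (measurable_gaussianPDF a u).comp measurable_fst
    have m2 : Measurable (fun p : ℝ × ℝ => gaussianPDF (b + p.1) w p.2) := by
      apply Measurable.ennreal_ofReal
      have : Continuous (fun p : ℝ × ℝ => gaussianPDFReal (b + p.1) w p.2) := by
        unfold gaussianPDFReal; fun_prop
      exact this.measurable
    exact (m1.mul m2).aemeasurable)]
  have huw : u + w ≠ 0 := by simp [hu]
  have hv' : u * w / (u + w) ≠ 0 := by
    simp [div_eq_zero_iff, mul_eq_zero, hu, hw, huw]
  rw [gaussianReal_apply _ huw]
  refine setLIntegral_congr_fun hs (fun z _ => ?_)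
  calc ∫⁻ x, gaussianPDF a u x * gaussianPDF (b + x) w z
      = ∫⁻ x, gaussianPDF (a + b) (u + w) z
          * gaussianPDF (a + u * (z - (a + b)) / (u + w)) (u * w / (u + w)) x := by
        congr 1
        ext x
        simp only [gaussianPDF]
        rw [← ENNReal.ofReal_mul (gaussianPDFReal_nonneg _ _ _),
          ← ENNReal.ofReal_mul (gaussianPDFReal_nonneg _ _ _), pdf_conv a b z hu hw x]
    _ = gaussianPDF (a + b) (u + w) z := by
        rw [lintegral_const_mul _ (measurable_gaussianPDF _ _),
          lintegral_gaussianPDF_eq_one _ hv', mul_one]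

lemma pi_inner_map : ∀ (n : ℕ) (c m : Fin n → ℝ) (v : ℝ≥0),
    (Measure.pi fun i => gaussianReal (m i) v).map (fun x => ∑ i, c i * x i)
      = gaussianReal (∑ i, c i * m i) (∑ i, (⟨(c i)^2, sq_nonneg _⟩ * v : ℝ≥0)) := by
  intro n
  induction n with
  | zero =>
    intro c m v
    simp only [Finset.univ_eq_empty, Finset.sum_empty]
    rw [Measure.map_const, measure_univ, one_smul, gaussianReal_zero_var]
  | succ n ih =>
    intro c m v
    have hmp := (measurePreserving_piFinSuccAbove (fun i : Fin (n+1) => gaussianReal (m i) v) 0).symm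
    rw [← hmp.map_eq, Measure.map_map (by fun_prop) (MeasurableEquiv.measurable _)]
    simp only [Fin.succAbove_zero]
    have hcomp : ((fun x : Fin (n+1) → ℝ => ∑ i, c i * x i)
        ∘ (MeasurableEquiv.piFinSuccAbove (fun _ : Fin (n+1) => ℝ) 0).symm)
        = fun p : ℝ × (Fin n → ℝ) => (c 0 * p.1) + ∑ j, c (Fin.succ j) * p.2 j := by
      ext p
      simp only [Function.comp_apply, MeasurableEquiv.piFinSuccAbove,
        MeasurableEquiv.symm_mk, MeasurableEquiv.coe_mk, Equiv.symm_symm,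
        Fin.insertNthEquiv, Equiv.coe_fn_mk, Fin.insertNth_zero]
      rw [Fin.sum_univ_succ]
      simp
    rw [hcomp]
    have h1 : Measurable (fun y : ℝ => c 0 * y) := by fun_prop
    have h2 : Measurable (fun x : Fin n → ℝ => ∑ j, c (Fin.succ j) * x j) := by fun_prop
    have heq : (fun p : ℝ × (Fin n → ℝ) => (c 0 * p.1) + ∑ j, c (Fin.succ j) * p.2 j)
        = (fun q : ℝ × ℝ => q.1 + q.2) ∘ (Prod.map (fun y => c 0 * y) (fun x => ∑ j, c (Fin.succ j) * x j)) := rfl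
    rw [heq, ← Measure.map_map (by fun_prop) (h1.prodMap h2),
      ← Measure.map_prod_map _ _ h1 h2, gaussianReal_map_const_mul,
      ih (fun j => c (Fin.succ j)) (fun j => m (Fin.succ j)) v, gaussian_conv,
      Fin.sum_univ_succ (f := fun i => c i * m i),
      Fin.sum_univ_succ (f := fun i => (⟨(c i)^2, sq_nonneg _⟩ * v : ℝ≥0))]
    rfl
lemma gaussN_inner (d : ℕ) (m : EuclideanSpace ℝ (Fin d)) (v : ℝ≥0)
    (θ : EuclideanSpace ℝ (Fin d)) :
    (gaussN d m v).map (fun x => ⟪θ, x⟫)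
      = gaussianReal ⟪θ, m⟫ (∑ i, (⟨(θ i)^2, sq_nonneg _⟩ * v : ℝ≥0)) := by
  have minner : Measurable (fun x : EuclideanSpace ℝ (Fin d) => ⟪θ, x⟫) :=
    measurable_const.inner measurable_id
  rw [gaussN, Measure.map_map minner (MeasurableEquiv.measurable _)]
  have : ((fun x : EuclideanSpace ℝ (Fin d) => ⟪θ, x⟫)
      ∘ (MeasurableEquiv.toLp 2 (Fin d → ℝ))) = fun x : Fin d → ℝ => ∑ i, θ i * x i := by
    ext x
    simp [PiLp.inner_apply, RCLike.inner_apply, mul_comm]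
  rw [this, pi_inner_map]
  congr 1
  simp [PiLp.inner_apply, RCLike.inner_apply, mul_comm]


lemma gaussianReal_eq_map (M : ℝ) (V : ℝ≥0) :
    gaussianReal M V = (gaussianReal 0 1).map (fun x => Real.sqrt V * x + M) := by
  have h1 : ((gaussianReal 0 1).map (fun x => Real.sqrt V * x)) = gaussianReal 0 V := by
    rw [show (fun x : ℝ => Real.sqrt V * x) = ((Real.sqrt V) * ·) from rfl,
      gaussianReal_map_const_mul]
    congr 1
    · ring
    · ext
      simp [Real.sq_sqrt V.coe_nonneg]
  have h2 : (fun x : ℝ => Real.sqrt V * x + M)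
      = (· + M) ∘ (fun x => Real.sqrt V * x) := rfl
  rw [h2, ← Measure.map_map (by fun_prop) (by fun_prop), h1, gaussianReal_map_add_const,
    zero_add]

lemma gaussianReal_Iic (M t : ℝ) {V : ℝ≥0} (hV : V ≠ 0) :
    gaussianReal M V (Set.Iic t) = gaussianReal 0 1 (Set.Iic ((t - M) / Real.sqrt V)) := by
  have hV' : (0:ℝ) < Real.sqrt V := Real.sqrt_pos.mpr
    (lt_of_le_of_ne V.coe_nonneg (by exact_mod_cast (Ne.symm hV)))
  rw [gaussianReal_eq_map M V, Measure.map_apply (by fun_prop) measurableSet_Iic]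
  congr 1
  ext x
  simp only [Set.mem_preimage, Set.mem_Iic]
  rw [← sub_nonneg, le_div_iff₀ hV']
  constructor <;> intro h <;> nlinarith

lemma gaussianReal_Ici (M t : ℝ) {V : ℝ≥0} (hV : V ≠ 0) :
    gaussianReal M V (Set.Ici t) = gaussianReal 0 1 (Set.Iic (-((t - M) / Real.sqrt V))) := by
  have hV' : (0:ℝ) < Real.sqrt V := Real.sqrt_pos.mpr
    (lt_of_le_of_ne V.coe_nonneg (by exact_mod_cast (Ne.symm hV)))
  rw [gaussianReal_eq_map M V, Measure.map_apply (by fun_prop) measurableSet_Ici]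
  have hsym : (gaussianReal 0 1).map (fun x : ℝ => -x) = gaussianReal 0 1 := by
    rw [show (fun x : ℝ => -x) = ((-1 : ℝ) * ·) by ext x; ring, gaussianReal_map_const_mul]
    norm_num
  conv_lhs => rw [← hsym]
  rw [Measure.map_apply (by fun_prop) (by
    exact (measurable_const_mul _ |>.add_const _) measurableSet_Ici)]
  congr 1
  ext x
  simp only [Set.mem_preimage, Set.mem_Ici, Set.mem_Iic]
  have key : Real.sqrt V * ((t - M) / Real.sqrt V) = t - M := by field_simp
  constructor <;> intro h <;> nlinarith [key, hV']

end Aux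

/-- The smoothed classification error of `f_θ(x) = sign(⟨θ,x⟩)` under the
conditional Gaussian model `x|y ∼ N(yμ, σ²I_d)` with Gaussian smoothing noise
`δ ∼ N(0, σ_s²I_d)` equals `Φ(−⟨θ,μ⟩/(‖θ‖₂·√(σ² + σ_s²)))`. -/
theorem stmt13 (d : ℕ) (hd : 1 ≤ d) (μ : EuclideanSpace ℝ (Fin d)) (σ : ℝ) (hσ : 0 < σ)
    (σs : ℝ) (hσs : 0 < σs) (θ : EuclideanSpace ℝ (Fin d)) (hθ : θ ≠ 0) :
    1 / 2 * (((gaussN d μ ⟨σ ^ 2, sq_nonneg σ⟩).prod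
          (gaussN d 0 ⟨σs ^ 2, sq_nonneg σs⟩))
        {p : EuclideanSpace ℝ (Fin d) × EuclideanSpace ℝ (Fin d) |
          ⟪θ, p.1 + p.2⟫ ≤ 0}).toReal
      + 1 / 2 * (((gaussN d (-μ) ⟨σ ^ 2, sq_nonneg σ⟩).prod
            (gaussN d 0 ⟨σs ^ 2, sq_nonneg σs⟩))
          {p : EuclideanSpace ℝ (Fin d) × EuclideanSpace ℝ (Fin d) |
            0 ≤ ⟪θ, p.1 + p.2⟫}).toReal
      = Phi (-⟪θ, μ⟫ / (‖θ‖ * Real.sqrt (σ ^ 2 + σs ^ 2))) := by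
  set v1 : ℝ≥0 := ⟨σ ^ 2, sq_nonneg σ⟩ with hv1
  set v2 : ℝ≥0 := ⟨σs ^ 2, sq_nonneg σs⟩ with hv2
  set V : ℝ≥0 := (∑ i, (⟨(θ i)^2, sq_nonneg _⟩ * v1 : ℝ≥0))
    + (∑ i, (⟨(θ i)^2, sq_nonneg _⟩ * v2 : ℝ≥0)) with hV
  have minner : Measurable (fun x : EuclideanSpace ℝ (Fin d) => ⟪θ, x⟫) :=
    measurable_const.inner measurable_id
  have hf : Measurable (fun p : EuclideanSpace ℝ (Fin d) × EuclideanSpace ℝ (Fin d) =>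
      ⟪θ, p.1 + p.2⟫) :=
    measurable_const.inner (measurable_fst.add measurable_snd)
  have hnormsq : (∑ i, (θ i)^2) = ‖θ‖^2 := by
    rw [← real_inner_self_eq_norm_sq, PiLp.inner_apply]
    simp [RCLike.inner_apply, sq]
  have hVcoe : (V : ℝ) = ‖θ‖^2 * (σ^2 + σs^2) := by
    rw [hV]
    push_cast
    trans (∑ i, θ i ^ 2 * σ ^ 2) + ∑ i, θ i ^ 2 * σs ^ 2
    · congr 1
    rw [← Finset.sum_mul, ← Finset.sum_mul, hnormsq]
    ring
  have hθn : (0:ℝ) < ‖θ‖ := norm_pos_iff.mpr hθ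
  have hVpos : (0:ℝ) < V := by rw [hVcoe]; positivity
  have hVne : V ≠ 0 := by
    intro h
    rw [h] at hVpos
    simp at hVpos
  have hsqrtV : Real.sqrt V = ‖θ‖ * Real.sqrt (σ^2 + σs^2) := by
    rw [hVcoe, Real.sqrt_mul (sq_nonneg _), Real.sqrt_sq (norm_nonneg _)]
  have hprob : ∀ (m : EuclideanSpace ℝ (Fin d)) (v : ℝ≥0),
      IsProbabilityMeasure (gaussN d m v) := by
    intro m v
    rw [gaussN]
    exact Measure.isProbabilityMeasure_map (MeasurableEquiv.measurable _).aemeasurable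
  have hprod : ∀ (m : EuclideanSpace ℝ (Fin d)),
      ((gaussN d m v1).prod (gaussN d 0 v2)).map
        (fun p : EuclideanSpace ℝ (Fin d) × EuclideanSpace ℝ (Fin d) => ⟪θ, p.1 + p.2⟫)
      = gaussianReal ⟪θ, m⟫ V := by
    intro m
    haveI := hprob m v1
    haveI := hprob (0 : EuclideanSpace ℝ (Fin d)) v2
    have hcomp : (fun p : EuclideanSpace ℝ (Fin d) × EuclideanSpace ℝ (Fin d) =>
          ⟪θ, p.1 + p.2⟫)
        = (fun q : ℝ × ℝ => q.1 + q.2)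
          ∘ (Prod.map (fun x : EuclideanSpace ℝ (Fin d) => ⟪θ, x⟫)
              (fun x : EuclideanSpace ℝ (Fin d) => ⟪θ, x⟫)) := by
      ext p
      simp [inner_add_right]
    rw [hcomp, ← Measure.map_map (by fun_prop) (minner.prodMap minner),
      ← Measure.map_prod_map _ _ minner minner, gaussN_inner, gaussN_inner,
      gaussian_conv, inner_zero_right, add_zero, ← hV]
  have h1 : ((gaussN d μ v1).prod (gaussN d 0 v2))
      {p : EuclideanSpace ℝ (Fin d) × EuclideanSpace ℝ (Fin d) | ⟪θ, p.1 + p.2⟫ ≤ 0}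
      = gaussianReal 0 1 (Set.Iic (-⟪θ, μ⟫ / (‖θ‖ * Real.sqrt (σ^2 + σs^2)))) := by
    have hset : {p : EuclideanSpace ℝ (Fin d) × EuclideanSpace ℝ (Fin d) |
        ⟪θ, p.1 + p.2⟫ ≤ 0}
        = (fun p : EuclideanSpace ℝ (Fin d) × EuclideanSpace ℝ (Fin d) =>
            ⟪θ, p.1 + p.2⟫) ⁻¹' (Set.Iic 0) := rfl
    rw [hset, ← Measure.map_apply hf measurableSet_Iic, hprod μ,
      gaussianReal_Iic _ _ hVne, zero_sub, hsqrtV, neg_div]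
  have h2 : ((gaussN d (-μ) v1).prod (gaussN d 0 v2))
      {p : EuclideanSpace ℝ (Fin d) × EuclideanSpace ℝ (Fin d) | 0 ≤ ⟪θ, p.1 + p.2⟫}
      = gaussianReal 0 1 (Set.Iic (-⟪θ, μ⟫ / (‖θ‖ * Real.sqrt (σ^2 + σs^2)))) := by
    have hset : {p : EuclideanSpace ℝ (Fin d) × EuclideanSpace ℝ (Fin d) |
        0 ≤ ⟪θ, p.1 + p.2⟫}
        = (fun p : EuclideanSpace ℝ (Fin d) × EuclideanSpace ℝ (Fin d) =>
            ⟪θ, p.1 + p.2⟫) ⁻¹' (Set.Ici 0) := rfl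
    rw [hset, ← Measure.map_apply hf measurableSet_Ici, hprod (-μ),
      gaussianReal_Ici _ _ hVne, inner_neg_right, zero_sub, neg_neg, hsqrtV, ← neg_div]
  rw [h1, h2, Phi]
  ring
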